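/- Let D be an Eulerian digraph and X₀ ⊇ X₁ ⊇ … ⊇ X_{r-1} a chain of vertex subsets such that for each k, X_k is a minimal subset of X_{k-1} with d(X_k) ≤ 2k (where X_{-1} = V(D) and d(V(D)) = 0). Then for any two distinct vertices x, y ∈ X_k, there exist at least k+1 pairwise edge-disjoint directed paths from x to y in D. -/

import Mathlib

/-- A multidigraph on vertex type `V` with edge type `E`. -/
structure MDG (V : Type) (E : Type) where
  tail : E → V
  head : E → V

namespace MDG

variable {V E : Type}

/-- A directed walk from `u` to `w`, given as the list of its edges. -/
inductive IsWalk (D : MDG V E) : V → V → List E → Prop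
  | nil (v : V) : IsWalk D v v []
  | cons {u w : V} {e : E} {p : List E} :
      D.tail e = u → IsWalk D (D.head e) w p → IsWalk D u w (e :: p)

/-- Out-degree of a vertex. -/
def outDeg (D : MDG V E) [Fintype E] [DecidableEq V] (v : V) : ℕ :=
  (Finset.univ.filter fun e => D.tail e = v).card

/-- In-degree of a vertex. -/
def inDeg (D : MDG V E) [Fintype E] [DecidableEq V] (v : V) : ℕ :=
  (Finset.univ.filter fun e => D.head e = v).card

/-- Eulerian: in-degree equals out-degree at every vertex. -/
def Eulerian (D : MDG V E) [Fintype E] [DecidableEq V] : Prop :=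
  ∀ v, D.outDeg v = D.inDeg v

/-- Simple: no loops, and at most one edge per ordered pair of vertices. -/
def Simple (D : MDG V E) : Prop :=
  (∀ e, D.tail e ≠ D.head e) ∧
  ∀ e e', D.tail e = D.tail e' → D.head e = D.head e' → e = e'

/-- `d⁺(X)`: number of edges from `X` to its complement. -/
def cutOut (D : MDG V E) [Fintype E] [DecidableEq V] (X : Finset V) : ℕ :=
  (Finset.univ.filter fun e => D.tail e ∈ X ∧ D.head e ∉ X).card

/-- `d⁻(X)`: number of edges from the complement of `X` into `X`. -/
def cutIn (D : MDG V E) [Fintype E] [DecidableEq V] (X : Finset V) : ℕ :=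
  (Finset.univ.filter fun e => D.head e ∈ X ∧ D.tail e ∉ X).card

/-- `d(X) = d⁺(X) + d⁻(X)`. -/
def cut (D : MDG V E) [Fintype E] [DecidableEq V] (X : Finset V) : ℕ :=
  D.cutOut X + D.cutIn X

/-- Adjacency: there is an edge from `a` to `b`. -/
def Adj (D : MDG V E) (a b : V) : Prop :=
  ∃ e, D.tail e = a ∧ D.head e = b

/-- Immersion of the complete digraph `K⃗_t`: an injection `φ : Fin t → V` together with
pairwise edge-disjoint directed trails, one from `φ i` to `φ j` for each ordered pair
`i ≠ j`. -/
def ImmerseK (D : MDG V E) (t : ℕ) : Prop :=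
  ∃ φ : Fin t → V, Function.Injective φ ∧
    ∃ P : Fin t → Fin t → List E,
      (∀ i j : Fin t, i ≠ j → D.IsWalk (φ i) (φ j) (P i j) ∧ (P i j).Nodup) ∧
      ∀ i j i' j' : Fin t, (i, j) ≠ (i', j') → ∀ e, e ∈ P i j → e ∉ P i' j'

/-- Immersion of a multidigraph `F` in `D`: an injection of the vertices together with
pairwise edge-disjoint directed trails realizing the edges of `F`. -/
def Immerse (D : MDG V E) {n m : ℕ} (F : MDG (Fin n) (Fin m)) : Prop :=
  ∃ φ : Fin n → V, Function.Injective φ ∧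
    ∃ P : Fin m → List E,
      (∀ f, D.IsWalk (φ (F.tail f)) (φ (F.head f)) (P f) ∧ (P f).Nodup) ∧
      ∀ f f', f ≠ f' → ∀ e, e ∈ P f → e ∉ P f'

end MDG

set_option linter.unusedSectionVars false
set_option linter.unusedVariables false

namespace ChainConn


open Finset

variable {V E : Type} [Fintype V] [Fintype E] [DecidableEq V]

lemma card_filter_eq_sum {α : Type} (p : α → Prop) [DecidablePred p] (s : Finset α) :
    (s.filter p).card = ∑ a ∈ s, if p a then 1 else 0 := by
  simpa using Finset.natCast_card_filter (α := ℕ) p s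

lemma sum_card_filter_eq (f : E → V) (S : Finset E) (Z : Finset V) :
    ∑ v ∈ Z, (S.filter fun e => f e = v).card = (S.filter fun e => f e ∈ Z).card := by
  rw [Finset.card_eq_sum_card_fiberwise (f := f) (s := S.filter fun e => f e ∈ Z) (t := Z)
    (fun e he => (Finset.mem_filter.mp he).2)]
  apply Finset.sum_congr rfl
  intro v hv
  rw [Finset.filter_filter]
  congr 1
  ext e
  simp only [Finset.mem_filter]
  constructor
  · rintro ⟨h1, h3⟩; exact ⟨h1, h3 ▸ hv, h3⟩
  · rintro ⟨h1, _, h3⟩; exact ⟨h1, h3⟩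

lemma split_card (f g : E → V) (S : Finset E) (Z : Finset V) :
    (S.filter fun e => f e ∈ Z).card
      = (S.filter fun e => f e ∈ Z ∧ g e ∈ Z).card
        + (S.filter fun e => f e ∈ Z ∧ g e ∉ Z).card := by
  classical
  have := Finset.card_filter_add_card_filter_not
    (s := S.filter fun e => f e ∈ Z) (p := fun e => g e ∈ Z)
  rw [Finset.filter_filter, Finset.filter_filter] at this
  omega

lemma cutOut_eq_cutIn (D : MDG V E) (he : D.Eulerian) (Z : Finset V) :
    D.cutOut Z = D.cutIn Z := by
  have h0 : ∑ v ∈ Z, D.outDeg v = ∑ v ∈ Z, D.inDeg v :=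
    Finset.sum_congr rfl fun v _ => he v
  unfold MDG.outDeg MDG.inDeg at h0
  rw [sum_card_filter_eq D.tail Finset.univ Z, sum_card_filter_eq D.head Finset.univ Z] at h0
  rw [split_card D.tail D.head Finset.univ Z, split_card D.head D.tail Finset.univ Z] at h0
  have hsame : (Finset.univ.filter fun e => D.tail e ∈ Z ∧ D.head e ∈ Z)
      = (Finset.univ.filter fun e => D.head e ∈ Z ∧ D.tail e ∈ Z) := by
    congr 1; ext e; exact and_comm
  rw [hsame] at h0
  unfold MDG.cutOut MDG.cutIn
  omega

lemma cut_eq_two_mul (D : MDG V E) (he : D.Eulerian) (Z : Finset V) :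
    D.cut Z = 2 * D.cutOut Z := by
  unfold MDG.cut
  rw [cutOut_eq_cutIn D he]
  omega

lemma cut_compl (D : MDG V E) (Z : Finset V) : D.cut Zᶜ = D.cut Z := by
  unfold MDG.cut MDG.cutOut MDG.cutIn
  have h1 : (Finset.univ.filter fun e => D.tail e ∈ Zᶜ ∧ D.head e ∉ Zᶜ)
      = (Finset.univ.filter fun e => D.head e ∈ Z ∧ D.tail e ∉ Z) := by
    congr 1; ext e; simp [Finset.mem_compl]; tauto
  have h2 : (Finset.univ.filter fun e => D.head e ∈ Zᶜ ∧ D.tail e ∉ Zᶜ)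
      = (Finset.univ.filter fun e => D.tail e ∈ Z ∧ D.head e ∉ Z) := by
    congr 1; ext e; simp [Finset.mem_compl]; tauto
  rw [h1, h2]
  omega

lemma cutOut_submod (D : MDG V E) (A B : Finset V) :
    D.cutOut (A ∪ B) + D.cutOut (A ∩ B) ≤ D.cutOut A + D.cutOut B := by
  classical
  unfold MDG.cutOut
  rw [card_filter_eq_sum, card_filter_eq_sum, card_filter_eq_sum, card_filter_eq_sum]
  rw [← Finset.sum_add_distrib, ← Finset.sum_add_distrib]
  apply Finset.sum_le_sum
  intro e _
  by_cases h1 : D.tail e ∈ A <;> by_cases h2 : D.tail e ∈ B <;>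
    by_cases h3 : D.head e ∈ A <;> by_cases h4 : D.head e ∈ B <;>
    simp [Finset.mem_union, Finset.mem_inter, h1, h2, h3, h4]

lemma cutIn_submod (D : MDG V E) (A B : Finset V) :
    D.cutIn (A ∪ B) + D.cutIn (A ∩ B) ≤ D.cutIn A + D.cutIn B := by
  classical
  unfold MDG.cutIn
  rw [card_filter_eq_sum, card_filter_eq_sum, card_filter_eq_sum, card_filter_eq_sum]
  rw [← Finset.sum_add_distrib, ← Finset.sum_add_distrib]
  apply Finset.sum_le_sum
  intro e _
  by_cases h1 : D.tail e ∈ A <;> by_cases h2 : D.tail e ∈ B <;>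
    by_cases h3 : D.head e ∈ A <;> by_cases h4 : D.head e ∈ B <;>
    simp [Finset.mem_union, Finset.mem_inter, h1, h2, h3, h4]

lemma cut_submod (D : MDG V E) (A B : Finset V) :
    D.cut (A ∪ B) + D.cut (A ∩ B) ≤ D.cut A + D.cut B := by
  have := cutOut_submod D A B
  have := cutIn_submod D A B
  unfold MDG.cut
  omega

lemma partI (D : MDG V E) (he : D.Eulerian) (r : ℕ) (X : ℕ → Finset V)
    (hX0 : X 0 = Finset.univ)
    (hchain : ∀ k < r, X (k + 1) ⊆ X k)
    (hne : ∀ k < r, (X (k + 1)).Nonempty)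
    (hcut : ∀ k < r, D.cut (X (k + 1)) ≤ 2 * k)
    (hmin : ∀ k < r, ∀ Y : Finset V, Y ⊂ X (k + 1) → Y.Nonempty → ¬ D.cut Y ≤ 2 * k) :
    ∀ k, k < r → ∀ x y : V, x ∈ X (k + 1) → y ∈ X (k + 1) → x ≠ y →
      ∀ Z : Finset V, x ∈ Z → y ∉ Z → 2 * k + 2 ≤ D.cut Z := by
  intro k
  induction k using Nat.strong_induction_on with
  | _ k IH =>
  intro hk x y hx hy hxy Z hxZ hyZ
  by_contra hcon
  push_neg at hcon
  have hZeven : D.cut Z = 2 * D.cutOut Z := cut_eq_two_mul D he Z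
  have hZ : D.cut Z ≤ 2 * k := by omega
  have hmink := hmin k hk
  -- the two pieces of X (k+1)
  have hA : 2 * k + 2 ≤ D.cut (Z ∩ X (k + 1)) := by
    have hss : Z ∩ X (k + 1) ⊂ X (k + 1) := by
      refine ⟨Finset.inter_subset_right, fun hs => hyZ ?_⟩
      exact (Finset.mem_inter.mp (hs hy)).1
    have h1 := hmink _ hss ⟨x, Finset.mem_inter.mpr ⟨hxZ, hx⟩⟩
    have h2 := cut_eq_two_mul D he (Z ∩ X (k + 1))
    omega
  have hA' : 2 * k + 2 ≤ D.cut (Zᶜ ∩ X (k + 1)) := by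
    have hss : Zᶜ ∩ X (k + 1) ⊂ X (k + 1) := by
      refine ⟨Finset.inter_subset_right, fun hs => ?_⟩
      have := (Finset.mem_inter.mp (hs hx)).1
      exact (Finset.mem_compl.mp this) hxZ
    have h1 := hmink _ hss ⟨y, Finset.mem_inter.mpr ⟨Finset.mem_compl.mpr hyZ, hy⟩⟩
    have h2 := cut_eq_two_mul D he (Zᶜ ∩ X (k + 1))
    omega
  -- minimal index with the same set
  have hex : ∃ j, X j = X (k + 1) := ⟨k + 1, rfl⟩
  classical
  set m := Nat.find hex with hm
  have hXm : X m = X (k + 1) := Nat.find_spec hex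
  have hmle : m ≤ k + 1 := Nat.find_le rfl
  by_cases hm0 : m = 0
  · -- X (k+1) = univ
    have huniv : X (k + 1) = Finset.univ := by rw [← hXm, hm0, hX0]
    have hss : Zᶜ ⊂ X (k + 1) := by
      rw [huniv]
      refine Finset.ssubset_univ_iff.mpr ?_
      intro hZc
      have : x ∈ Zᶜ := hZc ▸ Finset.mem_univ x
      exact (Finset.mem_compl.mp this) hxZ
    have h1 := hmink _ hss ⟨y, Finset.mem_compl.mpr hyZ⟩
    have h2 := cut_compl D Z
    omega
  · have hm1 : 1 ≤ m := Nat.one_le_iff_ne_zero.mpr hm0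
    have hm1r : m - 1 < r := by omega
    have hdXm : D.cut (X (k + 1)) ≤ 2 * (m - 1) := by
      have := hcut (m - 1) hm1r
      rwa [show m - 1 + 1 = m by omega, hXm] at this
    have hW := cut_submod D Z (X (k + 1))
    have hW' := cut_submod D Zᶜ (X (k + 1))
    rw [cut_compl D Z] at hW'
    have hW4 : D.cut (Z ∪ X (k + 1)) + 4 ≤ 2 * m := by omega
    have hW'4 : D.cut (Zᶜ ∪ X (k + 1)) + 4 ≤ 2 * m := by omega
    have hm2 : 2 ≤ m := by omega
    have hm2r : m - 2 < r := by omega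
    have hm2k : m - 2 < k := by omega
    have hXm1sub : X m ⊆ X (m - 1) := by
      have := hchain (m - 1) hm1r
      rwa [show m - 1 + 1 = m by omega] at this
    have hnsub : ¬ X (m - 1) ⊆ X (k + 1) := by
      intro hsub
      have heq : X (m - 1) = X (k + 1) :=
        Finset.Subset.antisymm hsub (hXm ▸ hXm1sub)
      exact Nat.find_min hex (show m - 1 < m by omega) heq
    obtain ⟨w, hwm1, hwk1⟩ := Finset.not_subset.mp hnsub
    have hwW : w ∉ Z ∪ X (k + 1) ∨ w ∉ Zᶜ ∪ X (k + 1) := by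
      by_contra hc
      push_neg at hc
      rcases Finset.mem_union.mp hc.1 with h | h
      · rcases Finset.mem_union.mp hc.2 with h' | h'
        · exact (Finset.mem_compl.mp h') h
        · exact hwk1 h'
      · exact hwk1 h
    have hxm1 : x ∈ X (m - 1) := hXm1sub (hXm ▸ hx)
    have hym1 : y ∈ X (m - 1) := hXm1sub (hXm ▸ hy)
    have hIH := IH (m - 2) hm2k hm2r
    rw [show m - 2 + 1 = m - 1 by omega] at hIH
    rcases hwW with hw | hw
    · have hxW : x ∈ Z ∪ X (k + 1) := Finset.mem_union.mpr (Or.inl hxZ)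
      have hxwne : x ≠ w := fun h => hw (h ▸ hxW)
      have := hIH x w hxm1 hwm1 hxwne (Z ∪ X (k + 1)) hxW hw
      omega
    · have hyW : y ∈ Zᶜ ∪ X (k + 1) := Finset.mem_union.mpr (Or.inl (Finset.mem_compl.mpr hyZ))
      have hywne : y ≠ w := fun h => hw (h ▸ hyW)
      have := hIH y w hym1 hwm1 hywne (Zᶜ ∪ X (k + 1)) hyW hw
      omega

variable [DecidableEq E]

/-- excess (out minus in) of a set of edges at a vertex -/
def exc (D : MDG V E) (S : Finset E) (v : V) : ℤ :=
  ((S.filter fun e => D.tail e = v).card : ℤ) - ((S.filter fun e => D.head e = v).card : ℤ)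

lemma exc_insert (D : MDG V E) {S : Finset E} {e : E} (h : e ∉ S) (v : V) :
    exc D (insert e S) v
      = exc D S v + (if v = D.tail e then 1 else 0) - (if v = D.head e then 1 else 0) := by
  unfold exc
  have ht : (insert e (S.filter fun e' => D.tail e' = v)).card
      = (S.filter fun e' => D.tail e' = v).card + 1 :=
    Finset.card_insert_of_notMem (fun hc => h (Finset.mem_filter.mp hc).1)
  have hh : (insert e (S.filter fun e' => D.head e' = v)).card
      = (S.filter fun e' => D.head e' = v).card + 1 :=
    Finset.card_insert_of_notMem (fun hc => h (Finset.mem_filter.mp hc).1)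
  rw [Finset.filter_insert, Finset.filter_insert]
  by_cases h1 : D.tail e = v <;> by_cases h2 : D.head e = v <;>
    simp [h1, h2, ht, hh, eq_comm (a := v)] <;> push_cast <;> ring

lemma exc_erase (D : MDG V E) {S : Finset E} {e : E} (h : e ∈ S) (v : V) :
    exc D (S.erase e) v
      = exc D S v - (if v = D.tail e then 1 else 0) + (if v = D.head e then 1 else 0) := by
  have h2 := exc_insert D (Finset.notMem_erase e S) v
  rw [Finset.insert_erase h] at h2
  linarith

/-- residual relation w.r.t. a flow `S` -/
def Res (D : MDG V E) (S : Finset E) (u w : V) : Prop :=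
  (∃ e, e ∉ S ∧ D.tail e = u ∧ D.head e = w) ∨ (∃ e, e ∈ S ∧ D.head e = u ∧ D.tail e = w)

/-- reachability by a vertex-nodup residual chain -/
def Reach (D : MDG V E) (S : Finset E) (x u : V) : Prop :=
  ∃ l : List V, List.Chain (Res D S) x l ∧
    (x :: l).getLast (List.cons_ne_nil _ _) = u ∧ (x :: l).Nodup

lemma reach_self (D : MDG V E) (S : Finset E) (x : V) : Reach D S x x :=
  ⟨[], List.Chain.nil, rfl, List.nodup_singleton x⟩

lemma chain_snoc {r : V → V → Prop} :
    ∀ (l : List V) (a w : V), List.Chain r a l →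
      r ((a :: l).getLast (List.cons_ne_nil _ _)) w → List.Chain r a (l ++ [w])
  | [], a, w, _, h2 => List.Chain.cons h2 List.Chain.nil
  | b :: l', a, w, h1, h2 => by
    change List.IsChain _ (_ :: _ :: _) at h1
    rw [List.chain_cons] at h1
    have := chain_snoc l' b w h1.2 (by rwa [List.getLast_cons_cons] at h2)
    exact List.Chain.cons h1.1 this

lemma getLast_snoc {A : Type} (a w : A) (l : List A) :
    (a :: (l ++ [w])).getLast (List.cons_ne_nil _ _) = w := by
  have h := List.getLast_concat' (a := w) (l := a :: l)
  simpa [List.concat_eq_append] using h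

lemma reach_closed (D : MDG V E) (S : Finset E) (x : V) {u w : V}
    (hu : Reach D S x u) (hr : Res D S u w) : Reach D S x w := by
  obtain ⟨l, hc, hl, hn⟩ := hu
  by_cases hw : w ∈ x :: l
  · obtain ⟨s, t, hst⟩ := List.append_of_mem hw
    cases s with
    | nil =>
      have : w = x := by have := congrArg (fun l => l.head?) hst; simp at this; exact this.symm
      exact this ▸ reach_self D S x
    | cons x' s' =>
      have hx' : x' = x ∧ l = s' ++ w :: t := by
        constructor
        · have := congrArg (fun l => l.head?) hst; simp at this; exact this.symm
        · have := congrArg List.tail hst; simpa using this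
      refine ⟨s' ++ [w], ?_, ?_, ?_⟩
      · have hpre : (x :: (s' ++ [w])) <+: (x :: l) := by
          refine ⟨t, ?_⟩
          simp [hx'.2]
        have h1 : List.Chain' (Res D S) (x :: l) := hc
        exact (h1.prefix hpre : List.Chain' (Res D S) (x :: (s' ++ [w])))
      · exact getLast_snoc x w s'
      · have hpre : (x :: (s' ++ [w])) <+: (x :: l) := by
          refine ⟨t, ?_⟩
          simp [hx'.2]
        exact hn.sublist hpre.sublist
  · refine ⟨l ++ [w], chain_snoc l x w hc (hl ▸ hr), ?_, ?_⟩
    · exact getLast_snoc x w l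
    · rw [show x :: (l ++ [w]) = (x :: l) ++ [w] by simp]
      refine List.Nodup.append hn (List.nodup_singleton w) ?_
      intro a ha hb
      rw [List.mem_singleton] at hb
      exact hw (hb ▸ ha)

lemma flip_chain (D : MDG V E) (S : Finset E) :
    ∀ (l : List V) (u : V) (T : Finset E),
      List.Chain (Res D S) u l →
      (u :: l).Nodup →
      (∀ e, D.tail e ∈ l ∨ D.head e ∈ l → (e ∈ T ↔ e ∈ S)) →
      ∃ T', ∀ v, exc D T' v
        = exc D T v + (if v = u then 1 else 0)
          - (if v = (u :: l).getLast (List.cons_ne_nil _ _) then 1 else 0)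
  | [], u, T, _, _, _ => ⟨T, fun v => by by_cases h : v = u <;> simp [h]⟩
  | w :: l', u, T, hc, hn, hinv => by
    change List.IsChain _ (_ :: _ :: _) at hc
    rw [List.chain_cons] at hc
    obtain ⟨hr, hc'⟩ := hc
    have hnul' : u ∉ w :: l' := (List.nodup_cons.mp hn).1
    have hn' : (w :: l').Nodup := (List.nodup_cons.mp hn).2
    have hwl' : w ∉ l' := (List.nodup_cons.mp hn').1
    have step : ∃ T₁ : Finset E,
        (∀ v, exc D T₁ v = exc D T v + (if v = u then 1 else 0) - (if v = w then 1 else 0)) ∧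
        (∀ e, D.tail e ∈ l' ∨ D.head e ∈ l' → (e ∈ T₁ ↔ e ∈ S)) := by
      rcases hr with ⟨e, heS, het, heh⟩ | ⟨e, heS, heh, het⟩
      · -- forward edge, not in S, hence not in T
        have heT : e ∉ T := by
          rw [hinv e (Or.inr (heh ▸ (List.mem_cons_self : w ∈ w :: l')))]
          exact heS
        refine ⟨insert e T, fun v => ?_, fun e' he' => ?_⟩
        · rw [exc_insert D heT v, het, heh]
        · have hee : e' ≠ e := by
            rintro rfl
            rcases he' with h | h
            · exact hnul' (List.mem_cons_of_mem w (het ▸ h))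
            · exact hwl' (heh ▸ h)
          rw [Finset.mem_insert]
          rw [hinv e' (he'.imp (List.mem_cons_of_mem w) (List.mem_cons_of_mem w))]
          simp [hee]
      · -- backward edge, in S, hence in T
        have heT : e ∈ T := by
          rw [hinv e (Or.inl (het ▸ (List.mem_cons_self : w ∈ w :: l')))]
          exact heS
        refine ⟨T.erase e, fun v => ?_, fun e' he' => ?_⟩
        · rw [exc_erase D heT v, het, heh]; ring
        · have hee : e' ≠ e := by
            rintro rfl
            rcases he' with h | h
            · exact hwl' (het ▸ h)
            · exact hnul' (List.mem_cons_of_mem w (heh ▸ h))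
          rw [Finset.mem_erase]
          rw [hinv e' (he'.imp (List.mem_cons_of_mem w) (List.mem_cons_of_mem w))]
          simp [hee]
    obtain ⟨T₁, hT₁, hinv₁⟩ := step
    obtain ⟨T', hT'⟩ := flip_chain D S l' w T₁ hc' hn' hinv₁
    refine ⟨T', fun v => ?_⟩
    rw [hT' v, hT₁ v, List.getLast_cons_cons]
    ring

lemma augment (D : MDG V E) (x y : V) (hxy : x ≠ y) (t : ℕ) (S : Finset E)
    (hbal : ∀ v, exc D S v = if v = x then (t : ℤ) else if v = y then -(t : ℤ) else 0)
    (hcut : ∀ Z : Finset V, x ∈ Z → y ∉ Z → t + 1 ≤ D.cutOut Z) :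
    ∃ S' : Finset E, ∀ v, exc D S' v
      = if v = x then ((t : ℤ) + 1) else if v = y then -((t : ℤ) + 1) else 0 := by
  classical
  have hreach : Reach D S x y := by
    by_contra hy
    set Z : Finset V := Finset.univ.filter (fun v => Reach D S x v) with hZ
    have hmemZ : ∀ v, v ∈ Z ↔ Reach D S x v := by
      intro v; simp [hZ]
    have hxZ : x ∈ Z := (hmemZ x).mpr (reach_self D S x)
    have hyZ : y ∉ Z := fun h => hy ((hmemZ y).mp h)
    have hcutZ := hcut Z hxZ hyZ
    have hleave : ∀ e, D.tail e ∈ Z → D.head e ∉ Z → e ∈ S := by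
      intro e h1 h2
      by_contra heS
      exact h2 ((hmemZ _).mpr (reach_closed D S x ((hmemZ _).mp h1)
        (Or.inl ⟨e, heS, rfl, rfl⟩)))
    have henter : ∀ e ∈ S, D.head e ∈ Z → D.tail e ∈ Z := by
      intro e heS h1
      exact (hmemZ _).mpr (reach_closed D S x ((hmemZ _).mp h1) (Or.inr ⟨e, heS, rfl, rfl⟩))
    have hsum : ∑ v ∈ Z, exc D S v = (t : ℤ) := by
      rw [Finset.sum_congr rfl (fun v _ => hbal v)]
      rw [Finset.sum_congr rfl (g := fun v => if v = x then (t : ℤ) else 0)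
        (fun v hv => by
          by_cases h1 : v = x
          · simp [h1]
          · have h2 : v ≠ y := fun h => hyZ (h ▸ hv)
            simp [h1, h2])]
      rw [Finset.sum_ite_eq' Z x (fun _ => (t : ℤ))]
      simp [hxZ]
    have hsum2 : ∑ v ∈ Z, exc D S v
        = ((S.filter fun e => D.tail e ∈ Z ∧ D.head e ∉ Z).card : ℤ)
          - ((S.filter fun e => D.head e ∈ Z ∧ D.tail e ∉ Z).card : ℤ) := by
      unfold exc
      rw [Finset.sum_sub_distrib]
      rw [← Nat.cast_sum, ← Nat.cast_sum]
      rw [sum_card_filter_eq D.tail S Z, sum_card_filter_eq D.head S Z]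
      have e1 := split_card D.tail D.head S Z
      have e2 := split_card D.head D.tail S Z
      have hsame : (S.filter fun e => D.tail e ∈ Z ∧ D.head e ∈ Z)
          = (S.filter fun e => D.head e ∈ Z ∧ D.tail e ∈ Z) := by
        congr 1; ext e; exact and_comm
      rw [hsame] at e1
      omega
    have h0 : (S.filter fun e => D.head e ∈ Z ∧ D.tail e ∉ Z) = ∅ := by
      refine Finset.filter_eq_empty_iff.mpr ?_
      rintro e heS ⟨h1, h2⟩
      exact h2 (henter e heS h1)
    have hfull : (Finset.univ.filter fun e => D.tail e ∈ Z ∧ D.head e ∉ Z)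
        = (S.filter fun e => D.tail e ∈ Z ∧ D.head e ∉ Z) := by
      ext e
      simp only [Finset.mem_filter, Finset.mem_univ, true_and]
      exact ⟨fun h => ⟨hleave e h.1 h.2, h⟩, fun h => h.2⟩
    have : D.cutOut Z = t := by
      unfold MDG.cutOut
      rw [hfull]
      rw [h0] at hsum2
      rw [hsum] at hsum2
      simp at hsum2
      omega
    omega
  obtain ⟨l, hc, hl, hn⟩ := hreach
  obtain ⟨S', hS'⟩ := flip_chain D S l x S hc hn (fun e _ => Iff.rfl)
  refine ⟨S', fun v => ?_⟩
  rw [hS' v, hl, hbal v]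
  by_cases h1 : v = x
  · have h2 : v ≠ y := h1 ▸ hxy
    simp [h1, h2, hxy.symm, hxy]
  · by_cases h2 : v = y
    · simp [h1, h2, hxy.symm]
      ring
    · simp [h1, h2]

lemma flow_exists (D : MDG V E) (x y : V) (hxy : x ≠ y) (t : ℕ)
    (hcut : ∀ Z : Finset V, x ∈ Z → y ∉ Z → t ≤ D.cutOut Z) :
    ∃ S : Finset E, ∀ v, exc D S v
      = if v = x then (t : ℤ) else if v = y then -(t : ℤ) else 0 := by
  induction t with
  | zero =>
    refine ⟨∅, fun v => ?_⟩
    simp [exc]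
  | succ t ih =>
    obtain ⟨S, hS⟩ := ih (fun Z h1 h2 => le_trans (Nat.le_succ t) (hcut Z h1 h2))
    obtain ⟨S', hS'⟩ := augment D x y hxy t S hS (fun Z h1 h2 => hcut Z h1 h2)
    refine ⟨S', fun v => ?_⟩
    rw [hS' v]
    push_cast
    ring_nf

lemma walk_count (D : MDG V E) {u w : V} {p : List E} (h : D.IsWalk u w p) (v : V) :
    ((p.countP fun e => decide (D.tail e = v)) : ℤ)
      - ((p.countP fun e => decide (D.head e = v)) : ℤ)
      = (if u = v then 1 else 0) - (if w = v then 1 else 0) := by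
  induction h with
  | nil => simp
  | @cons u' w' e p' het hwalk ih =>
    subst het
    rw [List.countP_cons, List.countP_cons]
    by_cases h1 : D.tail e = v <;> by_cases h2 : D.head e = v <;>
      by_cases h3 : w' = v <;>
      simp only [h1, h2, h3, if_true, if_false, decide_eq_true_eq, eq_self_iff_true] at ih ⊢ <;> push_cast <;> omega

lemma countP_toFinset {p : List E} (hnd : p.Nodup) (q : E → Prop) [DecidablePred q] :
    (p.toFinset.filter q).card = p.countP fun e => decide (q e) := by
  classical
  rw [List.countP_eq_length_filter]
  have h1 : (p.toFinset.filter q) = (p.filter fun e => decide (q e)).toFinset := by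
    rw [List.toFinset_filter]
    ext a
    simp
  rw [h1, List.toFinset_card_of_nodup (hnd.filter _)]

lemma exc_sdiff_walk (D : MDG V E) {S : Finset E} {p : List E} {u w : V}
    (hw : D.IsWalk u w p) (hnd : p.Nodup) (hsub : ∀ e ∈ p, e ∈ S) (v : V) :
    exc D (S \ p.toFinset) v
      = exc D S v - (if v = u then 1 else 0) + (if v = w then 1 else 0) := by
  classical
  have key : ∀ q : E → Prop, ∀ _ : DecidablePred q,
      ((S \ p.toFinset).filter q).card + (p.toFinset.filter q).card = (S.filter q).card := by
    intro q hq
    have hun : (S.filter q) = ((S \ p.toFinset).filter q) ∪ (p.toFinset.filter q) := by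
      ext e
      simp only [Finset.mem_filter, Finset.mem_union, Finset.mem_sdiff, List.mem_toFinset]
      constructor
      · rintro ⟨h1, h2⟩
        by_cases h3 : e ∈ p
        · exact Or.inr ⟨h3, h2⟩
        · exact Or.inl ⟨⟨h1, h3⟩, h2⟩
      · rintro (⟨⟨h1, _⟩, h2⟩ | ⟨h1, h2⟩)
        · exact ⟨h1, h2⟩
        · exact ⟨hsub e h1, h2⟩
    rw [hun, Finset.card_union_of_disjoint]
    rw [Finset.disjoint_left]
    rintro e he1 he2
    have := (Finset.mem_filter.mp he1).1
    exact (Finset.mem_sdiff.mp this).2 (Finset.mem_filter.mp he2).1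
  have k1 := key (fun e => D.tail e = v) (by infer_instance)
  have k2 := key (fun e => D.head e = v) (by infer_instance)
  have c1 := countP_toFinset hnd (fun e => D.tail e = v)
  have c2 := countP_toFinset hnd (fun e => D.head e = v)
  have wc := walk_count D hw v
  unfold exc
  rw [c1] at k1
  rw [c2] at k2
  -- pass to integers
  have k1' : ((((S \ p.toFinset)).filter fun e => D.tail e = v).card : ℤ)
      = ((S.filter fun e => D.tail e = v).card : ℤ)
        - ((p.countP fun e => decide (D.tail e = v)) : ℤ) := by
    omega
  have k2' : ((((S \ p.toFinset)).filter fun e => D.head e = v).card : ℤ)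
      = ((S.filter fun e => D.head e = v).card : ℤ)
        - ((p.countP fun e => decide (D.head e = v)) : ℤ) := by
    omega
  rw [k1', k2']
  have o1 : (if v = u then (1 : ℤ) else 0) = (if u = v then (1 : ℤ) else 0) := by
    by_cases h : v = u
    · simp [h]
    · rw [if_neg h, if_neg (fun hh => h hh.symm)]
  have o2 : (if v = w then (1 : ℤ) else 0) = (if w = v then (1 : ℤ) else 0) := by
    by_cases h : v = w
    · simp [h]
    · rw [if_neg h, if_neg (fun hh => h hh.symm)]
  rw [o1, o2]
  linarith

lemma extract (D : MDG V E) (y : V) :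
    ∀ (n : ℕ) (S : Finset E) (u : V), S.card ≤ n → u ≠ y →
      (∀ v, v ≠ y → 0 ≤ exc D S v) → 1 ≤ exc D S u →
      ∃ p : List E, D.IsWalk u y p ∧ p.Nodup ∧ ∀ e ∈ p, e ∈ S := by
  intro n
  induction n with
  | zero =>
    intro S u hcard _ _ hexc
    have : S = ∅ := Finset.card_eq_zero.mp (Nat.le_zero.mp hcard)
    subst this
    simp [exc] at hexc
  | succ n ih =>
    intro S u hcard huy hpos hexc
    have hout : ∃ e ∈ S, D.tail e = u := by
      have hne : (S.filter fun e => D.tail e = u).Nonempty := by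
        rw [← Finset.card_pos]
        unfold exc at hexc
        omega
      obtain ⟨e, he⟩ := hne
      exact ⟨e, (Finset.mem_filter.mp he).1, (Finset.mem_filter.mp he).2⟩
    obtain ⟨e, heS, het⟩ := hout
    by_cases hhy : D.head e = y
    · refine ⟨[e], MDG.IsWalk.cons het ?_, List.nodup_singleton e, by simp [heS]⟩
      rw [hhy]
      exact MDG.IsWalk.nil y
    · set S₂ := S.erase e with hS₂
      have hex2 : ∀ v, exc D S₂ v
          = exc D S v - (if v = u then 1 else 0) + (if v = D.head e then 1 else 0) := by
        intro v
        rw [hS₂, exc_erase D heS v, het]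
      have hcard2 : S₂.card ≤ n := by
        have h5 : S₂.card = S.card - 1 := by rw [hS₂]; exact Finset.card_erase_of_mem heS
        have h6 : 0 < S.card := Finset.card_pos.mpr ⟨e, heS⟩
        omega
      have hpos2 : ∀ v, v ≠ y → 0 ≤ exc D S₂ v := by
        intro v hv
        have hthis := hpos v hv
        rw [hex2 v]
        by_cases h1 : v = u
        · subst h1
          split_ifs <;> omega
        · split_ifs <;> omega
      have hexc2 : 1 ≤ exc D S₂ (D.head e) := by
        have h4 := hpos (D.head e) hhy
        rw [hex2 (D.head e)]
        by_cases h1 : D.head e = u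
        · rw [h1] at h4 ⊢
          simp
          omega
        · simp [h1]
          omega
      obtain ⟨p', hw', hnd', hsub'⟩ := ih S₂ (D.head e) hcard2 hhy hpos2 hexc2
      refine ⟨e :: p', MDG.IsWalk.cons het hw', ?_, ?_⟩
      · rw [List.nodup_cons]
        exact ⟨fun hc => (Finset.mem_erase.mp (hsub' e hc)).1 rfl, hnd'⟩
      · intro e' he'
        rcases List.mem_cons.mp he' with h | h
        · exact h ▸ heS
        · exact Finset.erase_subset e S (hsub' e' h)

lemma decompose (D : MDG V E) (x y : V) (hxy : x ≠ y) :
    ∀ (t : ℕ) (S : Finset E),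
      (∀ v, exc D S v = if v = x then (t : ℤ) else if v = y then -(t : ℤ) else 0) →
      ∃ P : Fin t → List E, (∀ i, D.IsWalk x y (P i) ∧ (P i).Nodup) ∧
        (∀ i i', i ≠ i' → ∀ e, e ∈ P i → e ∉ P i') ∧ (∀ i, ∀ e ∈ P i, e ∈ S) := by
  intro t
  induction t with
  | zero =>
    intro S _
    exact ⟨fun i => i.elim0, fun i => i.elim0, fun i => i.elim0, fun i => i.elim0⟩
  | succ t ih =>
    intro S hS
    have hpos : ∀ v, v ≠ y → 0 ≤ exc D S v := by
      intro v hv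
      rw [hS v]
      by_cases h1 : v = x
      · simp only [h1, if_true, eq_self_iff_true]
        positivity
      · simp [h1, hv]
    have hx1 : 1 ≤ exc D S x := by
      rw [hS x]
      simp only [if_pos rfl]
      push_cast
      omega
    obtain ⟨p₀, hw0, hnd0, hsub0⟩ := extract D y S.card S x le_rfl hxy hpos hx1
    set S' := S \ p₀.toFinset with hS'def
    have hS' : ∀ v, exc D S' v = if v = x then (t : ℤ) else if v = y then -(t : ℤ) else 0 := by
      intro v
      rw [hS'def, exc_sdiff_walk D hw0 hnd0 hsub0 v, hS v]
      by_cases h1 : v = x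
      · subst h1
        simp [hxy]
      · by_cases h2 : v = y
        · subst h2
          simp [h1]
        · simp [h1, h2]
    obtain ⟨P', h1, h2, h3⟩ := ih S' hS'
    refine ⟨Fin.cons p₀ P', ?_, ?_, ?_⟩
    · intro i
      refine Fin.cases ?_ ?_ i
      · simpa using ⟨hw0, hnd0⟩
      · intro j
        simpa using h1 j
    · intro i i' hne e hei hei'
      have hdisj : ∀ e, e ∈ p₀ → ∀ j : Fin t, e ∉ P' j := by
        intro e' he' j hc
        have := h3 j e' hc
        rw [hS'def, Finset.mem_sdiff] at this
        exact this.2 (List.mem_toFinset.mpr he')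
      induction i using Fin.cases with
      | zero =>
        induction i' using Fin.cases with
        | zero => exact hne rfl
        | succ j' =>
          rw [Fin.cons_zero] at hei
          rw [Fin.cons_succ] at hei'
          exact hdisj e hei j' hei'
      | succ j =>
        induction i' using Fin.cases with
        | zero =>
          rw [Fin.cons_succ] at hei
          rw [Fin.cons_zero] at hei'
          exact hdisj e hei' j hei
        | succ j' =>
          rw [Fin.cons_succ] at hei hei'
          refine h2 j j' (fun h => hne (congrArg Fin.succ h)) e hei hei'
    · intro i
      refine Fin.cases ?_ ?_ i
      · intro e he
        rw [Fin.cons_zero] at he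
        exact hsub0 e he
      · intro j e he
        rw [Fin.cons_succ] at he
        have := h3 j e he
        rw [hS'def, Finset.mem_sdiff] at this
        exact this.1

end ChainConn

/-- Let `D` be Eulerian and `X 1 ⊇ X 2 ⊇ … ⊇ X r` a chain of nonempty vertex subsets
(with `X 0 = V(D)`, so `X (k+1)` plays the role of the paper's `X_k`) such that each
`X (k+1)` is a minimal nonempty subset of `X k` with `d(X (k+1)) ≤ 2k`.  Then any two
distinct vertices of `X (k+1)` are joined by at least `k+1` pairwise edge-disjoint directed
trails. -/
theorem chain_connectivity {V E : Type} [Fintype V] [Fintype E] [DecidableEq V]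
    (D : MDG V E) (he : D.Eulerian) (r : ℕ) (X : ℕ → Finset V)
    (hX0 : X 0 = Finset.univ)
    (hchain : ∀ k < r, X (k + 1) ⊆ X k)
    (hne : ∀ k < r, (X (k + 1)).Nonempty)
    (hcut : ∀ k < r, D.cut (X (k + 1)) ≤ 2 * k)
    (hmin : ∀ k < r, ∀ Y : Finset V, Y ⊂ X (k + 1) → Y.Nonempty → ¬ D.cut Y ≤ 2 * k)
    (k : ℕ) (hk : k < r) (x y : V)
    (hx : x ∈ X (k + 1)) (hy : y ∈ X (k + 1)) (hxy : x ≠ y) :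
    ∃ P : Fin (k + 1) → List E,
      (∀ i, D.IsWalk x y (P i) ∧ (P i).Nodup) ∧
      ∀ i i', i ≠ i' → ∀ e, e ∈ P i → e ∉ P i' := by
  classical
  have hcutZ : ∀ Z : Finset V, x ∈ Z → y ∉ Z → k + 1 ≤ D.cutOut Z := by
    intro Z h1 h2
    have hp := ChainConn.partI D he r X hX0 hchain hne hcut hmin k hk x y hx hy hxy Z h1 h2
    have h2m := ChainConn.cut_eq_two_mul D he Z
    omega
  obtain ⟨S, hS⟩ := ChainConn.flow_exists D x y hxy (k + 1) hcutZ
  obtain ⟨P, hP1, hP2, _⟩ := ChainConn.decompose D x y hxy (k + 1) S hS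
  exact ⟨P, hP1, hP2⟩
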